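/- Fix α ∈ ℝ and let f^{jk}_l = 2α·ε^{jkl} be the su(2)-type structure constants on three indices. Define the matrix-valued function γ̃ on ℝ³ with entries γ̃^i_k(A) = δ^i_k − α·Σ_l ε^{ilk}·A_l + α²·A_i·A_k. Then γ̃ satisfies the first master equation of the linear Poisson gauge theory at every A ∈ ℝ³: Σ_i' (γ̃^j_{i'}(A)·∂^{i'}_A γ̃^k_l(A) − γ̃^k_{i'}(A)·∂^{i'}_A γ̃^j_l(A)) = Σ_{i'} γ̃^{i'}_l(A)·f^{jk}_{i'} for all j,k,l. -/

import Mathlib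

set_option maxHeartbeats 1000000


/-- The totally antisymmetric Levi-Civita symbol on three indices with `ε^{123} = 1`
(here indices run over `Fin 3`, i.e. `ε 0 1 2 = 1`). -/
noncomputable def levicivita (i j k : Fin 3) : ℝ :=
  (((j : ℕ) : ℝ) - ((i : ℕ) : ℝ)) * (((k : ℕ) : ℝ) - ((j : ℕ) : ℝ))
    * (((k : ℕ) : ℝ) - ((i : ℕ) : ℝ)) / 2

/-- Partial derivative with respect to the `i`-th coordinate of a real-valued function
of `A ∈ ℝ³`. -/
noncomputable def pd {N : ℕ} (i : Fin N) (g : (Fin N → ℝ) → ℝ) (A : Fin N → ℝ) : ℝ :=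
  fderiv ℝ g A (Pi.single i 1)

lemma pd_poly (c : ℝ) (e : Fin 3 → ℝ) (α : ℝ) (k l i : Fin 3) (A : Fin 3 → ℝ) :
    pd i (fun B : Fin 3 → ℝ => c - α * ∑ m, e m * B m + α ^ 2 * B k * B l) A
      = -(α * e i) + α ^ 2 * ((if k = i then A l else 0) + (if l = i then A k else 0)) := by
  have hproj : ∀ m : Fin 3, HasFDerivAt (fun B : Fin 3 → ℝ => B m)
      (ContinuousLinearMap.proj m : (Fin 3 → ℝ) →L[ℝ] ℝ) A := fun m =>
    hasFDerivAt_apply (𝕜 := ℝ) m A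
  have h : HasFDerivAt (fun B : Fin 3 → ℝ => c - α * ∑ m, e m * B m + α ^ 2 * B k * B l)
      ((-(α • (∑ m, e m • (ContinuousLinearMap.proj m : (Fin 3 → ℝ) →L[ℝ] ℝ))) +
        ((α ^ 2 * A k) • (ContinuousLinearMap.proj l : (Fin 3 → ℝ) →L[ℝ] ℝ)
          + (α ^ 2 * A l) • (ContinuousLinearMap.proj k : (Fin 3 → ℝ) →L[ℝ] ℝ)))) A := by
    have h1 : HasFDerivAt (fun B : Fin 3 → ℝ => c - α * ∑ m, e m * B m)
        (-(α • (∑ m, e m • (ContinuousLinearMap.proj m : (Fin 3 → ℝ) →L[ℝ] ℝ)))) A := by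
      have hs : HasFDerivAt (fun B : Fin 3 → ℝ => ∑ m, e m * B m)
          (∑ m, e m • (ContinuousLinearMap.proj m : (Fin 3 → ℝ) →L[ℝ] ℝ)) A :=
        HasFDerivAt.fun_sum (fun m _ => (hproj m).const_mul (e m))
      simpa using (hs.const_mul α).const_sub c
    have h2 : HasFDerivAt (fun B : Fin 3 → ℝ => α ^ 2 * B k * B l)
        ((α ^ 2 * A k) • (ContinuousLinearMap.proj l : (Fin 3 → ℝ) →L[ℝ] ℝ)
          + (α ^ 2 * A l) • (ContinuousLinearMap.proj k : (Fin 3 → ℝ) →L[ℝ] ℝ)) A := by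
      have := ((hproj k).const_mul (α ^ 2)).fun_mul (hproj l)
      refine this.congr_fderiv ?_
      simp [smul_smul, mul_comm]
    exact h1.add h2
  rw [pd, h.fderiv]
  simp [Pi.single_apply, Finset.mul_sum, eq_comm]
  split_ifs <;> ring

/-- For the su(2)-type structure constants `f^{jk}_l = 2α ε^{jkl}`, the
matrix-valued function `γ̃^i_k(A) = δ^i_k − α Σ_l ε^{ilk} A_l + α² A_i A_k` satisfies the
first master equation `Σ_i (γ̃^j_i ∂^i_A γ̃^k_l − γ̃^k_i ∂^i_A γ̃^j_l) = Σ_i γ̃^i_l f^{jk}_i`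
at every `A ∈ ℝ³`. -/
theorem su2_alternative_gamma_first_master (α : ℝ)
    (f : Fin 3 → Fin 3 → Fin 3 → ℝ)
    (hf : ∀ j k l, f j k l = 2 * α * levicivita j k l)
    (γt : (Fin 3 → ℝ) → Fin 3 → Fin 3 → ℝ)
    (hγt : ∀ A i k, γt A i k = (if i = k then 1 else 0)
        - α * ∑ l, levicivita i l k * A l + α ^ 2 * A i * A k) :
    ∀ A : Fin 3 → ℝ, ∀ j k l,
      ∑ i, (γt A j i * pd i (fun B => γt B k l) A - γt A k i * pd i (fun B => γt B j l) A)
        = ∑ i, γt A i l * f j k i := by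
  intro A j k l
  have hpd : ∀ i k l : Fin 3, pd i (fun B => γt B k l) A
      = -(α * levicivita k i l)
        + α ^ 2 * ((if k = i then A l else 0) + (if l = i then A k else 0)) := by
    intro i k l
    have heq : (fun B => γt B k l) = fun B : Fin 3 → ℝ =>
        (if k = l then (1 : ℝ) else 0) - α * ∑ m, levicivita k m l * B m
          + α ^ 2 * B k * B l := funext fun B => hγt B k l
    rw [heq, pd_poly]
  simp only [hpd]
  simp only [hγt, hf, Fin.sum_univ_three]
  fin_cases j <;> fin_cases k <;> fin_cases l <;>
    norm_num [levicivita, Fin.ext_iff, show ((⟨2, by norm_num⟩ : Fin 3) = 2) from rfl] <;>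
    ring
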